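/- Let h(x,y) = yᵈ + h₁(x)y^{d−1} + ⋯ + h_d(x) be a monic polynomial with coefficients h_i(x) ∈ ℂ[[x]]. Then there exists a positive integer n and power series σ₁, …, σ_d ∈ ℂ[[t]] such that h(tⁿ, y) = (y − σ₁(t))⋯(y − σ_d(t)) in ℂ[[t]][y]. -/

import Mathlib

open Polynomial PowerSeries

/-- The substitution `x ↦ xⁿ` on formal power series: `(substPow n f)` is `f(xⁿ)`. -/
noncomputable def substPow {R : Type*} [Semiring R] (n : ℕ) (f : PowerSeries R) :
    PowerSeries R :=
  PowerSeries.mk fun m => if n ∣ m then PowerSeries.coeff (m / n) f else 0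

/-- The substitution `x ↦ xⁿ` applied to each coefficient of a polynomial over power series:
`P(x,y) ↦ P(xⁿ, y)`. -/
noncomputable def substPowPoly {R : Type*} [CommSemiring R] (n : ℕ)
    (P : Polynomial (PowerSeries R)) : Polynomial (PowerSeries R) :=
  ∑ k ∈ Finset.range (P.natDegree + 1), Polynomial.C (substPow n (P.coeff k)) * Polynomial.X ^ k

namespace NP

variable {R : Type*} [CommRing R]

theorem coeff_substPow (n m : ℕ) (f : PowerSeries R) :
    PowerSeries.coeff m (substPow n f) =
      if n ∣ m then PowerSeries.coeff (m / n) f else 0 := by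
  simp [substPow]

theorem substPow_zero' (n : ℕ) : substPow n (0 : PowerSeries R) = 0 := by
  refine PowerSeries.ext fun m => ?_
  simp [coeff_substPow]

theorem substPow_one' {n : ℕ} (hn : 0 < n) : substPow n (1 : PowerSeries R) = 1 := by
  refine PowerSeries.ext fun m => ?_
  rw [coeff_substPow]
  by_cases h : n ∣ m
  · obtain ⟨k, rfl⟩ := h
    rw [if_pos ⟨k, rfl⟩, Nat.mul_div_cancel_left _ hn]
    rcases Nat.eq_zero_or_pos k with rfl | hk
    · simp
    · rw [PowerSeries.coeff_one, PowerSeries.coeff_one, if_neg hk.ne',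
        if_neg (by positivity : 0 < n * k).ne']
  · rw [if_neg h, PowerSeries.coeff_one, if_neg]
    rintro rfl
    exact h (dvd_zero n)

theorem substPow_add (n : ℕ) (f g : PowerSeries R) :
    substPow n (f + g) = substPow n f + substPow n g := by
  refine PowerSeries.ext fun m => ?_
  simp only [coeff_substPow, map_add]
  split <;> simp

theorem substPow_mul {n : ℕ} (hn : 0 < n) (f g : PowerSeries R) :
    substPow n (f * g) = substPow n f * substPow n g := by
  refine PowerSeries.ext fun m => ?_
  by_cases hnm : n ∣ m
  · obtain ⟨m', rfl⟩ := hnm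
    rw [coeff_substPow, if_pos ⟨m', rfl⟩, Nat.mul_div_cancel_left _ hn,
      PowerSeries.coeff_mul, PowerSeries.coeff_mul]
    refine Finset.sum_bij_ne_zero (fun p _ _ => (n * p.1, n * p.2)) ?_ ?_ ?_ ?_
    · rintro ⟨a, b⟩ h -
      rw [Finset.HasAntidiagonal.mem_antidiagonal] at h ⊢
      simp only at h ⊢
      rw [← Nat.mul_add, h]
    · rintro ⟨a, b⟩ h1 h1b ⟨c, e⟩ h2 h2b heq2
      simp only [Prod.mk.injEq] at heq2
      obtain ⟨h3, h4⟩ := heq2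
      simp [Nat.eq_of_mul_eq_mul_left hn h3, Nat.eq_of_mul_eq_mul_left hn h4]
    · rintro ⟨a, b⟩ hab hne
      rw [Finset.HasAntidiagonal.mem_antidiagonal] at hab
      simp only [coeff_substPow] at hne
      have ha : n ∣ a := by by_contra hc; simp [hc] at hne
      have hb : n ∣ b := by by_contra hc; simp [ha, hc] at hne
      obtain ⟨a', rfl⟩ := ha
      obtain ⟨b', rfl⟩ := hb
      refine ⟨(a', b'), ?_, ?_, rfl⟩
      · rw [Finset.HasAntidiagonal.mem_antidiagonal]
        have h5 : n * (a' + b') = n * m' := by rw [Nat.mul_add]; exact hab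
        exact Nat.eq_of_mul_eq_mul_left hn h5
      · rw [if_pos ⟨a', rfl⟩, if_pos ⟨b', rfl⟩, Nat.mul_div_cancel_left _ hn,
          Nat.mul_div_cancel_left _ hn] at hne
        simpa using hne
    · rintro ⟨a, b⟩ h -
      rw [coeff_substPow, coeff_substPow, if_pos ⟨a, rfl⟩, if_pos ⟨b, rfl⟩,
        Nat.mul_div_cancel_left _ hn, Nat.mul_div_cancel_left _ hn]
  · rw [coeff_substPow, if_neg hnm, PowerSeries.coeff_mul]
    symm
    refine Finset.sum_eq_zero fun p hp => ?_
    rw [Finset.HasAntidiagonal.mem_antidiagonal] at hp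
    rw [coeff_substPow, coeff_substPow]
    by_cases ha : n ∣ p.1
    · by_cases hb : n ∣ p.2
      · exact absurd (hp ▸ Nat.dvd_add ha hb) hnm
      · simp [hb]
    · simp [ha]

noncomputable def subHom (n : ℕ) (hn : 0 < n) : PowerSeries R →+* PowerSeries R where
  toFun := substPow n
  map_one' := substPow_one' hn
  map_mul' := substPow_mul hn
  map_zero' := substPow_zero' n
  map_add' := substPow_add n

@[simp] theorem subHom_apply (n : ℕ) (hn : 0 < n) (f : PowerSeries R) :
    subHom n hn f = substPow n f := rfl

theorem substPow_substPow {n₁ n₂ : ℕ} (h₁ : 0 < n₁) (h₂ : 0 < n₂) (f : PowerSeries R) :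
    substPow n₂ (substPow n₁ f) = substPow (n₁ * n₂) f := by
  refine PowerSeries.ext fun m => ?_
  simp only [coeff_substPow]
  by_cases hd : n₂ ∣ m
  · obtain ⟨k, rfl⟩ := hd
    rw [if_pos ⟨k, rfl⟩, Nat.mul_div_cancel_left _ h₂]
    by_cases hd1 : n₁ ∣ k
    · obtain ⟨c, rfl⟩ := hd1
      have e1 : n₂ * (n₁ * c) = n₁ * n₂ * c := by ring
      rw [if_pos ⟨c, rfl⟩, Nat.mul_div_cancel_left _ h₁, e1,
        if_pos ⟨c, rfl⟩, Nat.mul_div_cancel_left _ (Nat.mul_pos h₁ h₂)]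
    · rw [if_neg hd1, if_neg]
      rintro ⟨c, hc⟩
      refine hd1 ⟨c, Nat.eq_of_mul_eq_mul_left h₂ ?_⟩
      rw [hc]; ring
  · rw [if_neg hd, if_neg fun hc => hd ((dvd_mul_left n₂ n₁).trans hc)]

theorem substPow_X_pow {n : ℕ} (hn : 0 < n) (r : ℕ) :
    substPow n ((PowerSeries.X : PowerSeries R) ^ r) = PowerSeries.X ^ (n * r) := by
  refine PowerSeries.ext fun m => ?_
  rw [coeff_substPow, PowerSeries.coeff_X_pow, PowerSeries.coeff_X_pow]
  by_cases h : n ∣ m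
  · obtain ⟨k, rfl⟩ := h
    rw [if_pos ⟨k, rfl⟩, Nat.mul_div_cancel_left _ hn]
    by_cases hk : k = r
    · simp [hk]
    · rw [if_neg hk, if_neg fun hc => hk (Nat.eq_of_mul_eq_mul_left hn hc)]
  · rw [if_neg h, if_neg]
    rintro rfl
    exact h ⟨r, rfl⟩

theorem substPow_id (f : PowerSeries R) : substPow 1 f = f := by
  refine PowerSeries.ext fun m => ?_
  simp [coeff_substPow]

end NP

namespace NP

variable {R : Type*} [CommRing R]

theorem substPowPoly_eq_map {n : ℕ} (hn : 0 < n) (P : Polynomial (PowerSeries R)) :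
    substPowPoly n P = P.map (subHom n hn) := by
  refine Polynomial.ext fun k => ?_
  rw [Polynomial.coeff_map, substPowPoly, Polynomial.finset_sum_coeff]
  simp only [Polynomial.coeff_C_mul, Polynomial.coeff_X_pow, mul_ite, mul_one, mul_zero]
  rw [Finset.sum_ite_eq (Finset.range (P.natDegree + 1)) k fun j => substPow n (P.coeff j)]
  by_cases hk : k ∈ Finset.range (P.natDegree + 1)
  · rw [if_pos hk]; rfl
  · rw [if_neg hk, Polynomial.coeff_eq_zero_of_natDegree_lt (by
      simpa using Nat.lt_of_succ_le (Nat.not_lt.mp (by simpa using hk))), map_zero]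

theorem map_prod_linear {m : ℕ} (φ : PowerSeries R →+* PowerSeries R) (σ : Fin m → PowerSeries R) :
    (∏ i : Fin m, (Polynomial.X - Polynomial.C (σ i))).map φ =
      ∏ i : Fin m, (Polynomial.X - Polynomial.C (φ (σ i))) := by
  rw [Polynomial.map_prod]
  refine Finset.prod_congr rfl fun i _ => ?_
  rw [Polynomial.map_sub, Polynomial.map_X, Polynomial.map_C]

/-- t-coefficient of a polynomial over power series. -/
noncomputable def tc (N : ℕ) (P : Polynomial (PowerSeries R)) : Polynomial R :=
  ∑ k ∈ P.support, Polynomial.C (PowerSeries.coeff N (P.coeff k)) * Polynomial.X ^ k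

theorem tc_coeff (N : ℕ) (P : Polynomial (PowerSeries R)) (k : ℕ) :
    (tc N P).coeff k = PowerSeries.coeff N (P.coeff k) := by
  rw [tc, Polynomial.finset_sum_coeff]
  simp only [Polynomial.coeff_C_mul, Polynomial.coeff_X_pow, mul_ite, mul_one, mul_zero]
  rw [Finset.sum_ite_eq P.support k fun j => PowerSeries.coeff N (P.coeff j)]
  by_cases hk : k ∈ P.support
  · rw [if_pos hk]
  · rw [if_neg hk, Polynomial.notMem_support_iff.mp hk, map_zero]

theorem tc_zero (P : Polynomial (PowerSeries R)) :
    tc 0 P = P.map (PowerSeries.constantCoeff (R := R)) := by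
  ext k
  rw [tc_coeff, Polynomial.coeff_map, PowerSeries.coeff_zero_eq_constantCoeff]

theorem degree_tc_lt {P : Polynomial (PowerSeries R)} (hm : P.Monic) {N : ℕ} (hN : 1 ≤ N) :
    (tc N P).degree < (P.natDegree : WithBot ℕ) := by
  rw [Polynomial.degree_lt_iff_coeff_zero]
  intro m hm'
  rw [tc_coeff]
  rcases eq_or_lt_of_le hm' with heq | hlt
  · rw [← heq, hm.coeff_natDegree, PowerSeries.coeff_one, if_neg (by omega)]
  · rw [Polynomial.coeff_eq_zero_of_natDegree_lt (by exact_mod_cast hlt), map_zero]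

section Solver

variable [IsDomain R]

/-- Solve `g₀ * u + f₀ * v = w` with `deg u < deg f₀`. -/
noncomputable def solv (f₀ g₀ a b w : Polynomial R) : Polynomial R × Polynomial R :=
  ((b * w) %ₘ f₀, a * w + g₀ * ((b * w) /ₘ f₀))

theorem solv_eq {f₀ g₀ a b : Polynomial R} (hf₀ : f₀.Monic) (hab : a * f₀ + b * g₀ = 1)
    (w : Polynomial R) :
    g₀ * (solv f₀ g₀ a b w).1 + f₀ * (solv f₀ g₀ a b w).2 = w := by
  have h := Polynomial.modByMonic_add_div (b * w) f₀
  calc g₀ * ((b * w) %ₘ f₀) + f₀ * (a * w + g₀ * ((b * w) /ₘ f₀))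
      = g₀ * ((b * w) %ₘ f₀ + f₀ * ((b * w) /ₘ f₀)) + (a * f₀) * w := by ring
    _ = g₀ * (b * w) + (a * f₀) * w := by rw [h]
    _ = (a * f₀ + b * g₀) * w := by ring
    _ = w := by rw [hab, one_mul]

theorem solv_deg1 {f₀ : Polynomial R} (g₀ a b w : Polynomial R) (hf₀ : f₀.Monic) :
    (solv f₀ g₀ a b w).1.degree < f₀.degree :=
  Polynomial.degree_modByMonic_lt _ hf₀

theorem wb_lt_le {x y : WithBot ℕ} {m n : ℕ} (hx : x < (m : WithBot ℕ))
    (hy : y ≤ (n : WithBot ℕ)) : x + y < ((m + n : ℕ) : WithBot ℕ) := by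
  induction x with
  | bot => rw [WithBot.bot_add]; exact WithBot.bot_lt_coe _
  | coe x' =>
    induction y with
    | bot => rw [WithBot.add_bot]; exact WithBot.bot_lt_coe _
    | coe y' =>
      rw [Nat.cast_withBot] at hx hy
      have hx' : x' < m := by exact_mod_cast hx
      have hy' : y' ≤ n := by exact_mod_cast hy
      have hlt : x' + y' < m + n := by omega
      rw [Nat.cast_withBot]
      exact_mod_cast hlt

theorem wb_le_lt {x y : WithBot ℕ} {m n : ℕ} (hx : x ≤ (m : WithBot ℕ))
    (hy : y < (n : WithBot ℕ)) : x + y < ((m + n : ℕ) : WithBot ℕ) := by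
  have h2 := wb_lt_le hy hx
  rw [add_comm] at h2
  rw [add_comm m n]
  exact h2

theorem solv_deg2 {f₀ g₀ a b : Polynomial R} (hf₀ : f₀.Monic) (hg₀ : g₀.Monic)
    (hab : a * f₀ + b * g₀ = 1) {w : Polynomial R}
    (hw : w.degree < ((f₀.natDegree + g₀.natDegree : ℕ) : WithBot ℕ)) :
    (solv f₀ g₀ a b w).2.degree < g₀.degree := by
  set v := (solv f₀ g₀ a b w).2 with hv
  set u := (solv f₀ g₀ a b w).1 with hu
  have hfv : f₀ * v = w - g₀ * u := by
    have h2 := solv_eq hf₀ hab w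
    rw [← hu, ← hv] at h2
    linear_combination h2
  by_cases hv0 : v = 0
  · rw [hv0, Polynomial.degree_zero, Polynomial.degree_eq_natDegree hg₀.ne_zero]
    exact WithBot.bot_lt_coe _
  · have hdfv : (f₀ * v).degree < ((f₀.natDegree + g₀.natDegree : ℕ) : WithBot ℕ) := by
      rw [hfv]
      refine lt_of_le_of_lt (Polynomial.degree_sub_le _ _) (max_lt hw ?_)
      refine lt_of_le_of_lt (Polynomial.degree_mul_le _ _) ?_
      rw [add_comm f₀.natDegree]
      exact wb_le_lt Polynomial.degree_le_natDegree
        (lt_of_lt_of_le (solv_deg1 g₀ a b w hf₀) Polynomial.degree_le_natDegree)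
    have hmul : f₀.degree + v.degree < ((f₀.natDegree + g₀.natDegree : ℕ) : WithBot ℕ) := by
      rw [← Polynomial.degree_mul]; exact hdfv
    rw [Polynomial.degree_eq_natDegree hf₀.ne_zero, Nat.cast_add] at hmul
    rw [Polynomial.degree_eq_natDegree hg₀.ne_zero]
    exact (WithBot.add_lt_add_iff_left (by exact WithBot.coe_ne_bot)).mp hmul

end Solver

end NP

namespace NP

variable {R : Type*} [CommRing R] [IsDomain R]

/-- The Hensel-lifting coefficient sequence. -/
noncomputable def hseq (f₀ g₀ a b : Polynomial R) (h : Polynomial (PowerSeries R)) :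
    ℕ → Polynomial R × Polynomial R
  | 0 => (f₀, g₀)
  | (N + 1) =>
    solv f₀ g₀ a b (tc (N + 1) h - ∑ i ∈ (Finset.range N).attach,
      (hseq f₀ g₀ a b h (i.1 + 1)).1 * (hseq f₀ g₀ a b h (N - i.1)).2)
  decreasing_by
  · have := Finset.mem_range.mp i.2; omega
  · have := Finset.mem_range.mp i.2; omega

variable (f₀ g₀ a b : Polynomial R) (h : Polynomial (PowerSeries R))

theorem hseq_zero : hseq f₀ g₀ a b h 0 = (f₀, g₀) := by rw [hseq]

theorem hseq_key (hf₀ : f₀.Monic) (hab : a * f₀ + b * g₀ = 1)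
    (hred : tc 0 h = f₀ * g₀) (N : ℕ) :
    ∑ i ∈ Finset.range (N + 1),
      (hseq f₀ g₀ a b h i).1 * (hseq f₀ g₀ a b h (N - i)).2 = tc N h := by
  cases N with
  | zero => simp [hseq_zero, hred]
  | succ M =>
    rw [Finset.sum_range_succ, Finset.sum_range_succ']
    have e1 : ∀ i ∈ Finset.range M,
        (hseq f₀ g₀ a b h (i + 1)).1 * (hseq f₀ g₀ a b h (M + 1 - (i + 1))).2 =
        (hseq f₀ g₀ a b h (i + 1)).1 * (hseq f₀ g₀ a b h (M - i)).2 := by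
      intro i hi
      have e : M + 1 - (i + 1) = M - i := by omega
      rw [e]
    rw [Finset.sum_congr rfl e1]
    have e2 : ∑ i ∈ Finset.range M,
        (hseq f₀ g₀ a b h (i + 1)).1 * (hseq f₀ g₀ a b h (M - i)).2 =
        ∑ i ∈ (Finset.range M).attach,
        (hseq f₀ g₀ a b h (i.1 + 1)).1 * (hseq f₀ g₀ a b h (M - i.1)).2 :=
      (Finset.sum_attach _ _).symm
    rw [e2]
    set S := ∑ i ∈ (Finset.range M).attach,
        (hseq f₀ g₀ a b h (i.1 + 1)).1 * (hseq f₀ g₀ a b h (M - i.1)).2 with hS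
    have e3 : hseq f₀ g₀ a b h (M + 1) = solv f₀ g₀ a b (tc (M + 1) h - S) := by
      rw [hseq]
    have e4 := solv_eq hf₀ hab (tc (M + 1) h - S)
    simp only [Nat.sub_self, Nat.sub_zero, Nat.add_sub_cancel_left, hseq_zero, e3]
    linear_combination e4

end NP

namespace NP

variable {R : Type*} [CommRing R] [IsDomain R]
variable (f₀ g₀ a b : Polynomial R) (h : Polynomial (PowerSeries R))

theorem hseq_deg1 (hf₀ : f₀.Monic) {N : ℕ} (hN : 1 ≤ N) :
    (hseq f₀ g₀ a b h N).1.degree < f₀.degree := by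
  cases N with
  | zero => omega
  | succ M =>
    rw [hseq]
    exact solv_deg1 _ _ _ _ hf₀

theorem hseq_deg1' (hf₀ : f₀.Monic) (N : ℕ) :
    (hseq f₀ g₀ a b h N).1.degree ≤ (f₀.natDegree : WithBot ℕ) := by
  cases N with
  | zero => rw [hseq_zero]; exact Polynomial.degree_le_natDegree
  | succ M =>
    refine le_trans (le_of_lt (hseq_deg1 f₀ g₀ a b h hf₀ (Nat.succ_le_succ (Nat.zero_le M)))) ?_
    exact Polynomial.degree_le_natDegree

theorem hseq_deg2 (hm : h.Monic)
    (hdeg : h.natDegree = f₀.natDegree + g₀.natDegree)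
    (hf₀ : f₀.Monic) (hg₀ : g₀.Monic) (hab : a * f₀ + b * g₀ = 1) :
    ∀ N : ℕ, 1 ≤ N → (hseq f₀ g₀ a b h N).2.degree < g₀.degree := by
  intro N
  induction N using Nat.strong_induction_on with
  | _ N IH =>
    intro hN
    cases N with
    | zero => omega
    | succ M =>
      rw [hseq]
      refine solv_deg2 hf₀ hg₀ hab ?_
      refine lt_of_le_of_lt (Polynomial.degree_sub_le _ _) (max_lt ?_ ?_)
      · rw [← hdeg]
        exact degree_tc_lt hm (Nat.succ_le_succ (Nat.zero_le M))
      · refine lt_of_le_of_lt (Polynomial.degree_sum_le _ _) ?_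
        rw [Finset.sup_lt_iff (by rw [Nat.cast_withBot]; exact WithBot.bot_lt_coe _)]
        intro i _
        refine lt_of_le_of_lt (Polynomial.degree_mul_le _ _) ?_
        refine wb_lt_le ?_ ?_
        · exact lt_of_lt_of_le
            (hseq_deg1 f₀ g₀ a b h hf₀ (Nat.succ_le_succ (Nat.zero_le _)))
            Polynomial.degree_le_natDegree
        · rcases Nat.eq_zero_or_pos (M - i.1) with hz | hpos
          · rw [hz, hseq_zero]; exact Polynomial.degree_le_natDegree
          · exact le_trans (le_of_lt (IH (M - i.1) (by omega) hpos))
              Polynomial.degree_le_natDegree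

theorem hseq_deg2' (hm : h.Monic)
    (hdeg : h.natDegree = f₀.natDegree + g₀.natDegree)
    (hf₀ : f₀.Monic) (hg₀ : g₀.Monic) (hab : a * f₀ + b * g₀ = 1) (N : ℕ) :
    (hseq f₀ g₀ a b h N).2.degree ≤ (g₀.natDegree : WithBot ℕ) := by
  cases N with
  | zero => rw [hseq_zero]; exact Polynomial.degree_le_natDegree
  | succ M =>
    refine le_trans (le_of_lt (hseq_deg2 f₀ g₀ a b h hm hdeg hf₀ hg₀ hab (M + 1)
      (Nat.succ_le_succ (Nat.zero_le M)))) Polynomial.degree_le_natDegree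

end NP

namespace NP

variable {R : Type*} [CommRing R] [IsDomain R]

/-- Assemble a polynomial over power series from a sequence of polynomial coefficients. -/
noncomputable def assemble (d : ℕ) (c : ℕ → Polynomial R) : Polynomial (PowerSeries R) :=
  ∑ k ∈ Finset.range (d + 1),
    Polynomial.C (PowerSeries.mk fun N => (c N).coeff k) * Polynomial.X ^ k

theorem assemble_coeff {d : ℕ} {c : ℕ → Polynomial R}
    (hdeg : ∀ N, (c N).degree ≤ (d : WithBot ℕ)) (k : ℕ) :
    (assemble d c).coeff k = PowerSeries.mk fun N => (c N).coeff k := by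
  rw [assemble, Polynomial.finset_sum_coeff]
  simp only [Polynomial.coeff_C_mul, Polynomial.coeff_X_pow, mul_ite, mul_one, mul_zero]
  rw [Finset.sum_ite_eq (Finset.range (d + 1)) k
    fun j => PowerSeries.mk fun N => (c N).coeff j]
  by_cases hk : k ∈ Finset.range (d + 1)
  · rw [if_pos hk]
  · rw [if_neg hk]
    have hkd : (d : WithBot ℕ) < (k : WithBot ℕ) := by
      rw [Nat.cast_withBot, Nat.cast_withBot, WithBot.coe_lt_coe]
      simpa using hk
    refine (PowerSeries.ext fun N => ?_).symm
    rw [PowerSeries.coeff_mk, Polynomial.coeff_eq_zero_of_degree_lt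
      (lt_of_le_of_lt (hdeg N) hkd), map_zero]

theorem hensel (h : Polynomial (PowerSeries R)) (hm : h.Monic) (f₀ g₀ : Polynomial R)
    (hf₀ : f₀.Monic) (hg₀ : g₀.Monic) (hcop : IsCoprime f₀ g₀)
    (hred : h.map (PowerSeries.constantCoeff (R := R)) = f₀ * g₀) :
    ∃ f g : Polynomial (PowerSeries R), f.Monic ∧ g.Monic ∧
      f.natDegree = f₀.natDegree ∧ g.natDegree = g₀.natDegree ∧ h = f * g := by
  obtain ⟨a, b, hab⟩ := hcop
  have hdeg : h.natDegree = f₀.natDegree + g₀.natDegree := by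
    have h1 : (h.map (PowerSeries.constantCoeff (R := R))).natDegree = h.natDegree :=
      hm.natDegree_map _
    rw [hred] at h1
    rw [← h1, Polynomial.natDegree_mul hf₀.ne_zero hg₀.ne_zero]
  have hred' : tc 0 h = f₀ * g₀ := by rw [tc_zero, hred]
  set s := hseq f₀ g₀ a b h with hs
  have hdF : ∀ N, (s N).1.degree ≤ (f₀.natDegree : WithBot ℕ) := hseq_deg1' f₀ g₀ a b h hf₀
  have hdG : ∀ N, (s N).2.degree ≤ (g₀.natDegree : WithBot ℕ) :=
    hseq_deg2' f₀ g₀ a b h hm hdeg hf₀ hg₀ hab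
  set F := assemble f₀.natDegree (fun N => (s N).1) with hF
  set G := assemble g₀.natDegree (fun N => (s N).2) with hG
  have hFc : ∀ k, F.coeff k = PowerSeries.mk fun N => (s N).1.coeff k :=
    fun k => assemble_coeff hdF k
  have hGc : ∀ k, G.coeff k = PowerSeries.mk fun N => (s N).2.coeff k :=
    fun k => assemble_coeff hdG k
  -- leading coefficients
  have hFlead : F.coeff f₀.natDegree = 1 := by
    rw [hFc]
    refine PowerSeries.ext fun N => ?_
    rw [PowerSeries.coeff_mk, PowerSeries.coeff_one]
    cases N with
    | zero => simp [hs, hseq_zero, hf₀.coeff_natDegree]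
    | succ M =>
      rw [if_neg (Nat.succ_ne_zero M)]
      exact Polynomial.coeff_eq_zero_of_degree_lt
        (lt_of_lt_of_le (hseq_deg1 f₀ g₀ a b h hf₀ (Nat.succ_le_succ (Nat.zero_le M)))
          Polynomial.degree_le_natDegree)
  have hGlead : G.coeff g₀.natDegree = 1 := by
    rw [hGc]
    refine PowerSeries.ext fun N => ?_
    rw [PowerSeries.coeff_mk, PowerSeries.coeff_one]
    cases N with
    | zero => simp [hs, hseq_zero, hg₀.coeff_natDegree]
    | succ M =>
      rw [if_neg (Nat.succ_ne_zero M)]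
      exact Polynomial.coeff_eq_zero_of_degree_lt
        (lt_of_lt_of_le (hseq_deg2 f₀ g₀ a b h hm hdeg hf₀ hg₀ hab (M + 1)
          (Nat.succ_le_succ (Nat.zero_le M))) Polynomial.degree_le_natDegree)
  have hFdegle : F.degree ≤ (f₀.natDegree : WithBot ℕ) := by
    rw [Polynomial.degree_le_iff_coeff_zero]
    intro m hmlt
    rw [hFc]
    refine PowerSeries.ext fun N => ?_
    rw [PowerSeries.coeff_mk, map_zero, Polynomial.coeff_eq_zero_of_degree_lt
      (lt_of_le_of_lt (hdF N) hmlt)]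
  have hGdegle : G.degree ≤ (g₀.natDegree : WithBot ℕ) := by
    rw [Polynomial.degree_le_iff_coeff_zero]
    intro m hmlt
    rw [hGc]
    refine PowerSeries.ext fun N => ?_
    rw [PowerSeries.coeff_mk, map_zero, Polynomial.coeff_eq_zero_of_degree_lt
      (lt_of_le_of_lt (hdG N) hmlt)]
  have hFm : F.Monic := Polynomial.monic_of_degree_le f₀.natDegree hFdegle hFlead
  have hGm : G.Monic := Polynomial.monic_of_degree_le g₀.natDegree hGdegle hGlead
  have hFnd : F.natDegree = f₀.natDegree :=
    le_antisymm (Polynomial.natDegree_le_iff_degree_le.mpr hFdegle)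
      (Polynomial.le_natDegree_of_ne_zero (by rw [hFlead]; exact one_ne_zero))
  have hGnd : G.natDegree = g₀.natDegree :=
    le_antisymm (Polynomial.natDegree_le_iff_degree_le.mpr hGdegle)
      (Polynomial.le_natDegree_of_ne_zero (by rw [hGlead]; exact one_ne_zero))
  refine ⟨F, G, hFm, hGm, hFnd, hGnd, ?_⟩
  refine Polynomial.ext fun k => ?_
  refine PowerSeries.ext fun N => ?_
  rw [Polynomial.coeff_mul, map_sum]
  have e1 : ∀ p ∈ Finset.HasAntidiagonal.antidiagonal k,
      (PowerSeries.coeff N) (F.coeff p.1 * G.coeff p.2) =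
      ∑ q ∈ Finset.HasAntidiagonal.antidiagonal N, (s q.1).1.coeff p.1 * (s q.2).2.coeff p.2 := by
    intro p _
    rw [hFc, hGc, PowerSeries.coeff_mul]
    exact Finset.sum_congr rfl fun q _ => by rw [PowerSeries.coeff_mk, PowerSeries.coeff_mk]
  rw [Finset.sum_congr rfl e1, Finset.sum_comm]
  have e2 : ∀ q ∈ Finset.HasAntidiagonal.antidiagonal N,
      (∑ p ∈ Finset.HasAntidiagonal.antidiagonal k, (s q.1).1.coeff p.1 * (s q.2).2.coeff p.2) =
      ((s q.1).1 * (s q.2).2).coeff k := by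
    intro q _
    rw [Polynomial.coeff_mul]
  rw [Finset.sum_congr rfl e2]
  have e3 : ∑ q ∈ Finset.HasAntidiagonal.antidiagonal N, ((s q.1).1 * (s q.2).2).coeff k =
      (∑ q ∈ Finset.HasAntidiagonal.antidiagonal N, (s q.1).1 * (s q.2).2).coeff k :=
    (Polynomial.finset_sum_coeff _ _ _).symm
  rw [e3, Finset.Nat.sum_antidiagonal_eq_sum_range_succ_mk,
    hseq_key f₀ g₀ a b h hf₀ hab hred' N, tc_coeff]

end NP

namespace NP

variable {R : Type*} [CommRing R] [IsDomain R]

theorem subHom_congr {n m : ℕ} (hn : 0 < n) (hm : 0 < m) (e : n = m) :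
    (subHom n hn : PowerSeries R →+* PowerSeries R) = subHom m hm := by
  subst e; rfl

theorem map_subHom_mul (p : Polynomial (PowerSeries R)) {nA nB : ℕ} (hA : 0 < nA) (hB : 0 < nB)
    {m : ℕ} (σ : Fin m → PowerSeries R)
    (hp : p.map (subHom nA hA) = ∏ i : Fin m, (Polynomial.X - Polynomial.C (σ i))) :
    p.map (subHom (nA * nB) (Nat.mul_pos hA hB)) =
      ∏ i : Fin m, (Polynomial.X - Polynomial.C (substPow nB (σ i))) := by
  have hcomp : (subHom (nA * nB) (Nat.mul_pos hA hB) : PowerSeries R →+* PowerSeries R) =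
      (subHom nB hB).comp (subHom nA hA) := by
    refine RingHom.ext fun x => ?_
    exact (substPow_substPow hA hB x).symm
  rw [hcomp, ← Polynomial.map_map, hp, map_prod_linear]
  rfl

theorem combine {d₁ d₂ : ℕ} (f g : Polynomial (PowerSeries R))
    (Hf : ∃ n, ∃ hn : 0 < n, ∃ σ : Fin d₁ → PowerSeries R,
      f.map (subHom n hn) = ∏ i, (Polynomial.X - Polynomial.C (σ i)))
    (Hg : ∃ n, ∃ hn : 0 < n, ∃ σ : Fin d₂ → PowerSeries R,
      g.map (subHom n hn) = ∏ i, (Polynomial.X - Polynomial.C (σ i))) :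
    ∃ n, ∃ hn : 0 < n, ∃ σ : Fin (d₁ + d₂) → PowerSeries R,
      (f * g).map (subHom n hn) = ∏ i, (Polynomial.X - Polynomial.C (σ i)) := by
  obtain ⟨n₁, hn₁, σ₁, h1⟩ := Hf
  obtain ⟨n₂, hn₂, σ₂, h2⟩ := Hg
  refine ⟨n₁ * n₂, Nat.mul_pos hn₁ hn₂,
    Fin.append (fun i => substPow n₂ (σ₁ i)) (fun i => substPow n₁ (σ₂ i)), ?_⟩
  rw [Polynomial.map_mul]
  have hf' := map_subHom_mul f hn₁ hn₂ σ₁ h1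
  have hg' := map_subHom_mul g hn₂ hn₁ σ₂ h2
  rw [subHom_congr (Nat.mul_pos hn₂ hn₁) (Nat.mul_pos hn₁ hn₂) (Nat.mul_comm n₂ n₁)] at hg'
  rw [subHom_congr (Nat.mul_pos hn₁ hn₂) (Nat.mul_pos hn₁ hn₂) rfl] at hf'
  rw [hf', hg', Fin.prod_univ_add]
  congr 1
  · exact Finset.prod_congr rfl fun i _ => by rw [Fin.append_left]
  · exact Finset.prod_congr rfl fun i _ => by rw [Fin.append_right]

theorem scaleRoots_mul_monic (p q : Polynomial R) (hp : p.Monic) (hq : q.Monic) (w : R) :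
    (p * q).scaleRoots w = p.scaleRoots w * q.scaleRoots w := by
  refine Polynomial.ext fun k => ?_
  rw [Polynomial.coeff_scaleRoots, Polynomial.coeff_mul, Polynomial.coeff_mul,
    Polynomial.natDegree_mul hp.ne_zero hq.ne_zero, Finset.sum_mul]
  refine Finset.sum_congr rfl fun x hx => ?_
  rw [Polynomial.coeff_scaleRoots, Polynomial.coeff_scaleRoots]
  rw [Finset.HasAntidiagonal.mem_antidiagonal] at hx
  by_cases h1 : x.1 ≤ p.natDegree
  · by_cases h2 : x.2 ≤ q.natDegree
    · have e : p.natDegree - x.1 + (q.natDegree - x.2) =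
        p.natDegree + q.natDegree - k := by omega
      rw [← e, pow_add]; ring
    · rw [Polynomial.coeff_eq_zero_of_natDegree_lt (show q.natDegree < x.2 by omega)]
      ring
  · rw [Polynomial.coeff_eq_zero_of_natDegree_lt (show p.natDegree < x.1 by omega)]
    ring

theorem scaleRoots_linear (τ w : R) :
    (Polynomial.X - Polynomial.C τ).scaleRoots w = Polynomial.X - Polynomial.C (w * τ) := by
  refine Polynomial.ext fun k => ?_
  rw [Polynomial.coeff_scaleRoots, Polynomial.natDegree_X_sub_C]
  rcases k with _ | _ | k <;>
    simp [Polynomial.coeff_sub, Polynomial.coeff_C, pow_succ, mul_comm]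

theorem scaleRoots_one' (w : R) : (1 : Polynomial R).scaleRoots w = 1 := by
  refine Polynomial.ext fun k => ?_
  rw [Polynomial.coeff_scaleRoots, Polynomial.natDegree_one]
  rcases k with _ | k <;> simp

theorem scaleRoots_prod_linear {m : ℕ} (σ : Fin m → R) (w : R) :
    (∏ i, (Polynomial.X - Polynomial.C (σ i))).scaleRoots w =
      ∏ i, (Polynomial.X - Polynomial.C (w * σ i)) := by
  induction m with
  | zero => simp [scaleRoots_one']
  | succ m IH =>
    rw [Fin.prod_univ_castSucc, Fin.prod_univ_castSucc,
      scaleRoots_mul_monic _ _ (Polynomial.monic_prod_of_monic _ _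
        fun i _ => Polynomial.monic_X_sub_C _) (Polynomial.monic_X_sub_C _),
      IH, scaleRoots_linear]

theorem map_scaleRoots_monic {S : Type*} [CommRing S] [Nontrivial S] (φ : R →+* S) (p : Polynomial R)
    (hp : p.Monic) (w : R) :
    (p.scaleRoots w).map φ = (p.map φ).scaleRoots (φ w) := by
  refine Polynomial.ext fun k => ?_
  rw [Polynomial.coeff_map, Polynomial.coeff_scaleRoots, Polynomial.coeff_scaleRoots,
    Polynomial.coeff_map, hp.natDegree_map, map_mul, map_pow]

theorem map_subHom_one (P : Polynomial (PowerSeries R)) :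
    P.map (subHom 1 Nat.one_pos) = P := by
  refine Polynomial.ext fun k => ?_
  rw [Polynomial.coeff_map, subHom_apply, substPow_id]

theorem prod_linear_comp {m : ℕ} (ρ : Fin m → PowerSeries R) (w : PowerSeries R) :
    (∏ i, (Polynomial.X - Polynomial.C (ρ i))).comp (Polynomial.X - Polynomial.C w) =
      ∏ i, (Polynomial.X - Polynomial.C (ρ i + w)) := by
  rw [Polynomial.prod_comp]
  refine Finset.prod_congr rfl fun i _ => ?_
  rw [Polynomial.sub_comp, Polynomial.X_comp, Polynomial.C_comp, Polynomial.C_add]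
  ring

theorem coeff_comp_add {S : Type*} [CommRing S] (p : Polynomial S) {d : ℕ}
    (hp : p.Monic) (hd : p.natDegree = d) (hd1 : 1 ≤ d) (u : S) :
    (p.comp (Polynomial.X + Polynomial.C u)).coeff (d - 1) =
      p.coeff (d - 1) + d * u := by
  rw [Polynomial.comp_eq_sum_left, Polynomial.sum_over_range' p (by simp) (d + 1) (by omega),
    Polynomial.finset_sum_coeff]
  simp only [Polynomial.coeff_C_mul, Polynomial.coeff_X_add_C_pow]
  have e : d + 1 = (d - 1) + 1 + 1 := by omega
  rw [e, Finset.sum_range_succ, Finset.sum_range_succ]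
  have e2 : d - 1 + 1 = d := by omega
  have e3 : ∑ k ∈ Finset.range (d - 1),
      p.coeff k * (u ^ (k - (d - 1)) * (k.choose (d - 1) : S)) = 0 := by
    refine Finset.sum_eq_zero fun k hk => ?_
    rw [Finset.mem_range] at hk
    rw [Nat.choose_eq_zero_of_lt hk, Nat.cast_zero, mul_zero, mul_zero]
  rw [e3, zero_add, e2]
  have e4 : d - (d - 1) = 1 := by omega
  have e5 : d.choose (d - 1) = d := by
    have e5' := Nat.choose_succ_self_right (d - 1)
    rw [e2] at e5'
    exact e5'
  have e6 : (d - 1) - (d - 1) = 0 := Nat.sub_self _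
  have e7 : (d - 1).choose (d - 1) = 1 := Nat.choose_self _
  have e8 : p.coeff d = 1 := by rw [← hd]; exact hp.coeff_natDegree
  rw [e4, e5, e6, e7, e8, pow_zero, pow_one, Nat.cast_one]
  ring

end NP

namespace NP

open Polynomial

theorem coprime_linear_prod (a : ℂ) (T : Multiset ℂ) (hT : ∀ b ∈ T, b ≠ a) :
    IsCoprime (Polynomial.X - Polynomial.C a) ((T.map fun b => Polynomial.X - Polynomial.C b).prod) := by
  induction T using Multiset.induction_on with
  | empty => simpa using isCoprime_one_right
  | cons b T IH =>
    rw [Multiset.map_cons, Multiset.prod_cons]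
    refine IsCoprime.mul_right ?_ (IH fun x hx => hT x (Multiset.mem_cons_of_mem hx))
    refine isCoprime_X_sub_C_of_isUnit_sub ?_
    have hba : b ≠ a := hT b (Multiset.mem_cons_self b T)
    exact (sub_ne_zero.mpr fun hc => hba hc.symm).isUnit

theorem pow_case_analysis {d : ℕ} (hd1 : 1 ≤ d) (p : Polynomial ℂ) (hp : p.Monic)
    (hd : p.natDegree = d) :
    (∃ a ∈ p.roots, ∃ b ∈ p.roots, a ≠ b) ∨ ∃ a : ℂ, p = (Polynomial.X - Polynomial.C a) ^ d := by
  have hsplit : Splits p := IsAlgClosed.splits p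
  have hcard : Multiset.card p.roots = d := by
    rw [splits_iff_card_roots.mp hsplit, hd]
  have hne : p.roots ≠ 0 := by
    intro hc
    rw [hc] at hcard
    simp at hcard
    omega
  obtain ⟨a, ha⟩ := Multiset.exists_mem_of_ne_zero hne
  by_cases hb : ∃ b ∈ p.roots, b ≠ a
  · obtain ⟨b, hbmem, hba⟩ := hb
    exact Or.inl ⟨a, ha, b, hbmem, fun hc => hba hc.symm⟩
  · push_neg at hb
    have hrep : p.roots = Multiset.replicate d a :=
      Multiset.eq_replicate.mpr ⟨hcard, hb⟩
    refine Or.inr ⟨a, ?_⟩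
    have := hsplit.eq_prod_roots_of_monic hp
    rw [hrep, Multiset.map_replicate, Multiset.prod_replicate] at this
    exact this

theorem trace_zero_case {d : ℕ} (hd1 : 1 ≤ d) (p : Polynomial ℂ) (hp : p.Monic)
    (hd : p.natDegree = d) (htr : p.coeff (d - 1) = 0) :
    (∃ a ∈ p.roots, ∃ b ∈ p.roots, a ≠ b) ∨ p = Polynomial.X ^ d := by
  rcases pow_case_analysis hd1 p hp hd with h | ⟨a, ha⟩
  · exact Or.inl h
  · refine Or.inr ?_
    have hco : ((Polynomial.X - Polynomial.C a) ^ d).coeff (d - 1) = -(d * a) := by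
      have e : (Polynomial.X - Polynomial.C a) = Polynomial.X + Polynomial.C (-a) := by rw [map_neg]; ring
      rw [e, Polynomial.coeff_X_add_C_pow]
      have e4 : d - (d - 1) = 1 := by omega
      have e5' := Nat.choose_succ_self_right (d - 1)
      have e2 : d - 1 + 1 = d := by omega
      rw [e2] at e5'
      rw [e4, e5', pow_one]
      push_cast
      ring
    rw [ha, hco] at htr
    have ha0 : a = 0 := by
      have hdne : (d : ℂ) ≠ 0 := Nat.cast_ne_zero.mpr (by omega)
      have h0 : (d : ℂ) * a = 0 := neg_eq_zero.mp htr
      exact (mul_eq_zero.mp h0).resolve_left hdne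
    rw [ha, ha0]
    simp

theorem factor_of_two_roots {d : ℕ} (p : Polynomial ℂ) (hp : p.Monic) (hd : p.natDegree = d)
    {a b : ℂ} (ha : a ∈ p.roots) (hb : b ∈ p.roots) (hab : a ≠ b) :
    ∃ f₀ g₀ : Polynomial ℂ, f₀.Monic ∧ g₀.Monic ∧ IsCoprime f₀ g₀ ∧ p = f₀ * g₀ ∧
      1 ≤ f₀.natDegree ∧ f₀.natDegree < d ∧ f₀.natDegree + g₀.natDegree = d := by
  have hsplit : Splits p := IsAlgClosed.splits p
  have hcard : Multiset.card p.roots = d := by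
    rw [splits_iff_card_roots.mp hsplit, hd]
  set m := p.roots.count a with hm
  set T := p.roots.filter (fun x => ¬ x = a) with hT
  have hsplitprod := hsplit.eq_prod_roots_of_monic hp
  have hdecomp : p.roots = Multiset.replicate m a + T := by
    rw [hT, hm, ← Multiset.filter_eq' p.roots a]
    exact (Multiset.filter_add_not _ _).symm
  set f₀ := (Polynomial.X - Polynomial.C a) ^ m with hf₀def
  set g₀ := (T.map fun x => Polynomial.X - Polynomial.C x).prod with hg₀def
  have hprod : p = f₀ * g₀ := by
    rw [hsplitprod, hdecomp, Multiset.map_add, Multiset.prod_add,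
      Multiset.map_replicate, Multiset.prod_replicate]
  have hf₀m : f₀.Monic := (monic_X_sub_C a).pow m
  have hg₀m : g₀.Monic := monic_multiset_prod_of_monic _ _ fun x _ => monic_X_sub_C x
  have hTa : ∀ x ∈ T, x ≠ a := by
    intro x hx
    exact (Multiset.mem_filter.mp hx).2
  have hcop : IsCoprime f₀ g₀ := (coprime_linear_prod a T hTa).pow_left
  have hf₀d : f₀.natDegree = m := by
    rw [hf₀def, Polynomial.natDegree_pow, Polynomial.natDegree_X_sub_C, mul_one]
  have hm1 : 1 ≤ m := Multiset.count_pos.mpr ha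
  have hbT : b ∈ T := Multiset.mem_filter.mpr ⟨hb, fun hc => hab hc.symm⟩
  have hcards : m + Multiset.card T = d := by
    rw [← hcard, hdecomp]
    simp [Multiset.card_replicate]
  have hTc : 1 ≤ Multiset.card T := by
    refine Multiset.card_pos.mpr fun hc => ?_
    rw [hc] at hbT
    exact Multiset.notMem_zero b hbT
  have hsum : f₀.natDegree + g₀.natDegree = d := by
    have := Polynomial.natDegree_mul hf₀m.ne_zero hg₀m.ne_zero
    rw [← hprod, hd] at this
    omega
  exact ⟨f₀, g₀, hf₀m, hg₀m, hcop, hprod, by omega, by omega, hsum⟩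

end NP

namespace NP

theorem coeff_sumCX {R : Type*} [CommRing R] (c : ℕ → PowerSeries R) (d k : ℕ) :
    (∑ j ∈ Finset.range (d + 1), Polynomial.C (c j) * Polynomial.X ^ j).coeff k =
      if k ≤ d then c k else 0 := by
  rw [Polynomial.finset_sum_coeff]
  simp only [Polynomial.coeff_C_mul, Polynomial.coeff_X_pow, mul_ite, mul_one, mul_zero]
  rw [Finset.sum_ite_eq (Finset.range (d + 1)) k c]
  simp [Nat.lt_succ_iff]

theorem cast_fin_split {d d' : ℕ} (e : d' = d) (P : Polynomial (PowerSeries ℂ))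
    (H : ∃ n, ∃ hn : 0 < n, ∃ σ : Fin d' → PowerSeries ℂ,
      P.map (subHom n hn) = ∏ i, (Polynomial.X - Polynomial.C (σ i))) :
    ∃ n, ∃ hn : 0 < n, ∃ σ : Fin d → PowerSeries ℂ,
      P.map (subHom n hn) = ∏ i, (Polynomial.X - Polynomial.C (σ i)) := by
  subst e; exact H

theorem split_of_two_roots {d : ℕ}
    (IH : ∀ d' < d, ∀ h' : Polynomial (PowerSeries ℂ), h'.Monic → h'.natDegree = d' →
      ∃ n, ∃ hn : 0 < n, ∃ σ : Fin d' → PowerSeries ℂ,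
        h'.map (subHom n hn) = ∏ i, (Polynomial.X - Polynomial.C (σ i)))
    (p : Polynomial (PowerSeries ℂ)) (hpm : p.Monic) (hpd : p.natDegree = d)
    (htwo : ∃ a ∈ (p.map (PowerSeries.constantCoeff (R := ℂ))).roots,
      ∃ b ∈ (p.map (PowerSeries.constantCoeff (R := ℂ))).roots, a ≠ b) :
    ∃ n, ∃ hn : 0 < n, ∃ σ : Fin d → PowerSeries ℂ,
      p.map (subHom n hn) = ∏ i, (Polynomial.X - Polynomial.C (σ i)) := by
  obtain ⟨a, ha, b, hb, hab⟩ := htwo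
  have hpredm : (p.map (PowerSeries.constantCoeff (R := ℂ))).Monic := hpm.map _
  have hpredd : (p.map (PowerSeries.constantCoeff (R := ℂ))).natDegree = d := by
    rw [hpm.natDegree_map, hpd]
  obtain ⟨f₀, g₀, hf₀, hg₀, hcop, hprod, hm1, hmd, hsumd⟩ :=
    factor_of_two_roots (p.map (PowerSeries.constantCoeff (R := ℂ))) hpredm hpredd ha hb hab
  obtain ⟨f, g, hfm, hgm, hfd, hgd, hfg⟩ := hensel p hpm f₀ g₀ hf₀ hg₀ hcop hprod
  have Hf := IH f₀.natDegree (by omega) f hfm hfd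
  have Hg := IH g₀.natDegree (by omega) g hgm hgd
  have hcomb := combine f g Hf Hg
  rw [← hfg] at hcomb
  exact cast_fin_split hsumd p hcomb

theorem main (d : ℕ) : ∀ h : Polynomial (PowerSeries ℂ), h.Monic → h.natDegree = d →
    ∃ n, ∃ hn : 0 < n, ∃ σ : Fin d → PowerSeries ℂ,
      h.map (subHom n hn) = ∏ i, (Polynomial.X - Polynomial.C (σ i)) := by
  induction d using Nat.strong_induction_on with
  | _ d IH =>
  intro h hmonic hdeg
  classical
  rcases Nat.eq_zero_or_pos d with rfl | hd1
  · refine ⟨1, Nat.one_pos, Fin.elim0, ?_⟩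
    have h1 : h = 1 := hmonic.natDegree_eq_zero.mp hdeg
    rw [h1]
    simp
  -- Tschirnhaus transformation
  set t₀ : PowerSeries ℂ := -(PowerSeries.C ((d : ℂ)⁻¹) * h.coeff (d - 1)) with ht₀
  set h₁ := h.comp (Polynomial.X + Polynomial.C t₀) with hh₁
  have hm1 : h₁.Monic := hmonic.comp_X_add_C t₀
  have hd1' : h₁.natDegree = d := by
    rw [hh₁, Polynomial.natDegree_comp, Polynomial.natDegree_X_add_C, mul_one, hdeg]
  have hdmul : ((d : ℕ) : PowerSeries ℂ) * t₀ = - h.coeff (d - 1) := by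
    have hdC : ((d : ℕ) : PowerSeries ℂ) = PowerSeries.C ((d : ℕ) : ℂ) :=
      (map_natCast (PowerSeries.C (R := ℂ)) d).symm
    have hdne : ((d : ℕ) : ℂ) ≠ 0 := Nat.cast_ne_zero.mpr (by omega)
    rw [ht₀, hdC, mul_neg, ← mul_assoc, ← map_mul, mul_inv_cancel₀ hdne, map_one, one_mul]
  have htr : h₁.coeff (d - 1) = 0 := by
    rw [hh₁, coeff_comp_add h hmonic hdeg hd1 t₀, hdmul]
    ring
  have hback : h = h₁.comp (Polynomial.X - Polynomial.C t₀) := by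
    rw [hh₁, Polynomial.comp_assoc]
    have e : (Polynomial.X + Polynomial.C t₀).comp (Polynomial.X - Polynomial.C t₀) =
        (Polynomial.X : Polynomial (PowerSeries ℂ)) := by
      rw [Polynomial.add_comp, Polynomial.X_comp, Polynomial.C_comp]
      ring
    rw [e, Polynomial.comp_X]
  suffices Hsplit1 : ∃ n, ∃ hn : 0 < n, ∃ σ : Fin d → PowerSeries ℂ,
      h₁.map (subHom n hn) = ∏ i, (Polynomial.X - Polynomial.C (σ i)) by
    obtain ⟨n, hn, ρ, hρ⟩ := Hsplit1
    refine ⟨n, hn, fun i => ρ i + substPow n t₀, ?_⟩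
    rw [hback, Polynomial.map_comp, Polynomial.map_sub, Polynomial.map_X, Polynomial.map_C,
      hρ, subHom_apply, prod_linear_comp]
  -- analyze the reduction of h₁
  have hm1red : (h₁.map (PowerSeries.constantCoeff (R := ℂ))).Monic := hm1.map _
  have hd1red : (h₁.map (PowerSeries.constantCoeff (R := ℂ))).natDegree = d := by
    rw [hm1.natDegree_map, hd1']
  have htrred : (h₁.map (PowerSeries.constantCoeff (R := ℂ))).coeff (d - 1) = 0 := by
    rw [Polynomial.coeff_map, htr, map_zero]
  rcases trace_zero_case hd1 _ hm1red hd1red htrred with htwo | hpow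
  · exact split_of_two_roots IH h₁ hm1 hd1' htwo
  -- reduction is X^d : all low coefficients have positive order
  have hlow : ∀ k, k < d → PowerSeries.constantCoeff (R := ℂ) (h₁.coeff k) = 0 := by
    intro k hk
    have hc := congrArg (fun q => Polynomial.coeff q k) hpow
    simp only [Polynomial.coeff_map, Polynomial.coeff_X_pow] at hc
    rw [hc, if_neg (by omega)]
  by_cases hzero : ∀ k, k < d → h₁.coeff k = 0
  · -- h₁ = X^d
    have hX : h₁ = Polynomial.X ^ d := by
      refine Polynomial.ext fun k => ?_
      rw [Polynomial.coeff_X_pow]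
      rcases lt_trichotomy k d with hk | rfl | hk
      · rw [hzero k hk, if_neg (by omega)]
      · rw [if_pos rfl, ← hd1', hm1.coeff_natDegree]
      · rw [Polynomial.coeff_eq_zero_of_natDegree_lt (by omega), if_neg (by omega)]
    refine ⟨1, Nat.one_pos, fun _ => 0, ?_⟩
    rw [map_subHom_one, hX]
    simp [Finset.prod_const]
  -- NEWTON POLYGON STEP
  push_neg at hzero
  obtain ⟨kstar, hkstard, hkstar⟩ := hzero
  have hex : ∀ k, h₁.coeff k ≠ 0 → ∃ m, PowerSeries.coeff m (h₁.coeff k) ≠ 0 := by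
    intro k hk
    by_contra hc
    push_neg at hc
    exact hk (PowerSeries.ext fun m => by rw [hc m, map_zero])
  set E : ℕ → ℕ := fun k => if hk : h₁.coeff k ≠ 0 then Nat.find (hex k hk) else 0 with hE
  have hEcoeff : ∀ k, (hk : h₁.coeff k ≠ 0) → PowerSeries.coeff (E k) (h₁.coeff k) ≠ 0 := by
    intro k hk
    rw [hE]; simp only [dif_pos hk]
    exact Nat.find_spec (hex k hk)
  have hEmin : ∀ k, (hk : h₁.coeff k ≠ 0) → ∀ m, m < E k →
      PowerSeries.coeff m (h₁.coeff k) = 0 := by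
    intro k hk m hm
    rw [hE] at hm; simp only [dif_pos hk] at hm
    by_contra hc
    exact (Nat.find_min (hex k hk) hm) hc
  have hEpos : ∀ k, k < d → h₁.coeff k ≠ 0 → 1 ≤ E k := by
    intro k hk hck
    by_contra hc
    have hE0 : E k = 0 := by omega
    have := hEcoeff k hck
    rw [hE0, PowerSeries.coeff_zero_eq_constantCoeff] at this
    exact this (hlow k hk)
  set S := (Finset.range d).filter (fun k => h₁.coeff k ≠ 0) with hS
  have hSne : S.Nonempty := ⟨kstar, Finset.mem_filter.mpr ⟨Finset.mem_range.mpr hkstard, hkstar⟩⟩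
  obtain ⟨k₀, hk₀S, hk₀min⟩ :=
    Finset.exists_min_image S (fun k => (E k : ℚ) / ((d - k : ℕ) : ℚ)) hSne
  have hk₀d : k₀ < d := Finset.mem_range.mp (Finset.mem_filter.mp hk₀S).1
  have hck₀ : h₁.coeff k₀ ≠ 0 := (Finset.mem_filter.mp hk₀S).2
  set r := E k₀ with hr'
  set s := d - k₀ with hs'
  have hs : 0 < s := by omega
  have hrpos : 1 ≤ r := hEpos k₀ hk₀d hck₀
  have key : ∀ k ∈ S, r * (d - k) ≤ s * E k := by
    intro k hk
    have hkd : k < d := Finset.mem_range.mp (Finset.mem_filter.mp hk).1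
    have h1 := hk₀min k hk
    rw [div_le_div_iff₀ (by exact_mod_cast hs) (by exact_mod_cast (by omega : 0 < d - k))] at h1
    have h2 : (r : ℚ) * ((d - k : ℕ) : ℚ) ≤ (E k : ℚ) * ((s : ℕ) : ℚ) := by exact_mod_cast h1
    have h3 : r * (d - k) ≤ E k * s := by exact_mod_cast h2
    exact le_of_le_of_eq h3 (Nat.mul_comm (E k) s)
  have hdvd : ∀ k, (PowerSeries.X : PowerSeries ℂ) ^ (r * (d - k)) ∣ substPow s (h₁.coeff k) := by
    intro k
    by_cases hck : h₁.coeff k = 0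
    · rw [hck, substPow_zero']
      exact dvd_zero _
    rw [PowerSeries.X_pow_dvd_iff]
    intro m hm
    rw [coeff_substPow]
    split_ifs with hsm
    · obtain ⟨j, rfl⟩ := hsm
      rw [Nat.mul_div_cancel_left _ hs]
      rcases Nat.lt_or_ge k d with hkd | hkd
      · have hkS : k ∈ S := Finset.mem_filter.mpr ⟨Finset.mem_range.mpr hkd, hck⟩
        have h4 := key k hkS
        have h5 : j < E k := by
          have : s * j < s * E k := by omega
          exact Nat.lt_of_mul_lt_mul_left this
        exact hEmin k hck j h5
      · exfalso
        have : d - k = 0 := by omega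
        rw [this, Nat.mul_zero] at hm
        omega
    · rfl
  set bk : ℕ → PowerSeries ℂ := fun k => (hdvd k).choose with hbkdef
  have hbk : ∀ k, substPow s (h₁.coeff k) =
      (PowerSeries.X : PowerSeries ℂ) ^ (r * (d - k)) * bk k := fun k => (hdvd k).choose_spec
  set h₂ : Polynomial (PowerSeries ℂ) :=
    ∑ j ∈ Finset.range (d + 1), Polynomial.C (bk j) * Polynomial.X ^ j with hh₂
  have h₂coeff : ∀ k, h₂.coeff k = if k ≤ d then bk k else 0 := fun k => coeff_sumCX bk d k
  have hcd : h₁.coeff d = 1 := by rw [← hd1']; exact hm1.coeff_natDegree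
  have hbkd : bk d = 1 := by
    have h6 := hbk d
    rw [hcd, substPow_one' hs, Nat.sub_self, Nat.mul_zero, pow_zero, one_mul] at h6
    exact h6.symm
  have h₂degle : h₂.degree ≤ (d : WithBot ℕ) := by
    rw [Polynomial.degree_le_iff_coeff_zero]
    intro m hm
    rw [h₂coeff, if_neg]
    rw [Nat.cast_withBot, Nat.cast_withBot, WithBot.coe_lt_coe] at hm
    omega
  have h₂lead : h₂.coeff d = 1 := by rw [h₂coeff, if_pos le_rfl, hbkd]
  have h₂m : h₂.Monic := Polynomial.monic_of_degree_le d h₂degle h₂lead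
  have h₂deg : h₂.natDegree = d :=
    le_antisymm (Polynomial.natDegree_le_iff_degree_le.mpr h₂degle)
      (Polynomial.le_natDegree_of_ne_zero (by rw [h₂lead]; exact one_ne_zero))
  have hbtr : bk (d - 1) = 0 := by
    have h7 := hbk (d - 1)
    rw [htr, substPow_zero'] at h7
    rcases mul_eq_zero.mp h7.symm with h8 | h8
    · exact absurd h8 (pow_ne_zero _ PowerSeries.X_ne_zero)
    · exact h8
  have hbk₀ : PowerSeries.constantCoeff (R := ℂ) (bk k₀) ≠ 0 := by
    have h9 := congrArg (PowerSeries.coeff (r * s)) (hbk k₀)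
    rw [← hs'] at h9
    rw [coeff_substPow, if_pos (dvd_mul_left s r), Nat.mul_div_cancel r hs,
      PowerSeries.coeff_X_pow_mul', if_pos le_rfl, Nat.sub_self] at h9
    rw [← PowerSeries.coeff_zero_eq_constantCoeff, ← h9]
    exact hEcoeff k₀ hck₀
  have htr₂ : h₂.coeff (d - 1) = 0 := by
    rw [h₂coeff, if_pos (by omega), hbtr]
  have h₂redm : (h₂.map (PowerSeries.constantCoeff (R := ℂ))).Monic := h₂m.map _
  have h₂redd : (h₂.map (PowerSeries.constantCoeff (R := ℂ))).natDegree = d := by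
    rw [h₂m.natDegree_map, h₂deg]
  have h₂redtr : (h₂.map (PowerSeries.constantCoeff (R := ℂ))).coeff (d - 1) = 0 := by
    rw [Polynomial.coeff_map, htr₂, map_zero]
  rcases trace_zero_case hd1 _ h₂redm h₂redd h₂redtr with htwo₂ | hpow₂
  · -- h₂ splits; transfer via scaleRoots
    obtain ⟨n₃, hn₃, τ, hτ⟩ := split_of_two_roots IH h₂ h₂m h₂deg htwo₂
    have hscale : h₁.map (subHom s hs) = h₂.scaleRoots (PowerSeries.X ^ r) := by
      refine Polynomial.ext fun k => ?_
      rw [Polynomial.coeff_map, Polynomial.coeff_scaleRoots, h₂deg, subHom_apply]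
      rcases le_or_gt k d with hkd | hkd
      · rw [h₂coeff, if_pos hkd, hbk k, pow_mul]
        exact mul_comm _ _
      · rw [Polynomial.coeff_eq_zero_of_natDegree_lt (by rw [hd1']; omega),
          substPow_zero', h₂coeff, if_neg (by omega), zero_mul]
    have hn' : 0 < s * n₃ := Nat.mul_pos hs hn₃
    refine ⟨s * n₃, hn', fun i => PowerSeries.X ^ (n₃ * r) * τ i, ?_⟩
    have hcomp : (subHom (s * n₃) hn' : PowerSeries ℂ →+* PowerSeries ℂ) =
        (subHom n₃ hn₃).comp (subHom s hs) :=
      RingHom.ext fun x => (substPow_substPow hs hn₃ x).symm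
    rw [hcomp, ← Polynomial.map_map, hscale, map_scaleRoots_monic _ _ h₂m, hτ,
      subHom_apply, substPow_X_pow hn₃, scaleRoots_prod_linear]
  · -- impossible: reduction of h₂ cannot be X^d
    exfalso
    have h11 : (h₂.map (PowerSeries.constantCoeff (R := ℂ))).coeff k₀ = 0 := by
      rw [hpow₂, Polynomial.coeff_X_pow, if_neg (by omega)]
    rw [Polynomial.coeff_map, h₂coeff, if_pos (by omega)] at h11
    exact hbk₀ h11

end NP

/-- Newton–Puiseux: for a monic polynomial
`h = yᵈ + h₁(x)y^{d−1} + ⋯ + h_d(x)` over `ℂ[[x]]` there exist `n ≥ 1` and power series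
`σ₁, …, σ_d ∈ ℂ[[t]]` with `h(tⁿ, y) = (y − σ₁(t)) ⋯ (y − σ_d(t))`. -/
theorem stmt4 (d : ℕ) (h : Polynomial (PowerSeries ℂ)) (hmonic : h.Monic)
    (hdeg : h.natDegree = d) :
    ∃ n : ℕ, 0 < n ∧ ∃ σ : Fin d → PowerSeries ℂ,
      substPowPoly n h = ∏ i : Fin d, (Polynomial.X - Polynomial.C (σ i)) := by
  obtain ⟨n, hn, σ, hσ⟩ := NP.main d h hmonic hdeg
  refine ⟨n, hn, σ, ?_⟩
  rw [NP.substPowPoly_eq_map hn]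
  exact hσ
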